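/- For a globally hyperbolic poset X, the set of maximal elements of the interval domain IX with the relative Scott topology is homeomorphic to X with the interval topology. -/

import Mathlib

/-- `x` is way below `y`. -/
def wayBelow {P : Type*} [Preorder P] (x y : P) : Prop :=
  ∀ S : Set P, S.Nonempty → DirectedOn (· ≤ ·) S → ∀ s : P, IsLUB S s → y ≤ s →
    ∃ z ∈ S, x ≤ z

/-- A poset is a dcpo if every nonempty directed subset has a supremum. -/
def IsDcpo (P : Type*) [Preorder P] : Prop :=
  ∀ S : Set P, S.Nonempty → DirectedOn (· ≤ ·) S → ∃ s : P, IsLUB S s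

/-- `B` is a (domain-theoretic) basis for `P`. -/
def IsDomainBasis {P : Type*} [Preorder P] (B : Set P) : Prop :=
  ∀ x : P, ∃ S : Set P, S ⊆ B ∧ S.Nonempty ∧ DirectedOn (· ≤ ·) S ∧
    (∀ a ∈ S, wayBelow a x) ∧ IsLUB S x

/-- A poset is continuous if it has a basis (equivalently, the whole poset is a basis). -/
def IsContinuousPoset (P : Type*) [Preorder P] : Prop :=
  IsDomainBasis (Set.univ : Set P)

/-- The Scott topology on a poset. -/
def scottTop (P : Type*) [Preorder P] : TopologicalSpace P where
  IsOpen U := (∀ x ∈ U, ∀ y, x ≤ y → y ∈ U) ∧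
    ∀ S : Set P, S.Nonempty → DirectedOn (· ≤ ·) S → ∀ s : P, IsLUB S s → s ∈ U →
      (S ∩ U).Nonempty
  isOpen_univ := ⟨fun _ _ _ _ => trivial,
    fun S hS _ _ _ _ => hS.imp fun x hx => ⟨hx, trivial⟩⟩
  isOpen_inter := by
    rintro U V ⟨hUup, hUin⟩ ⟨hVup, hVin⟩
    refine ⟨fun x hx y hxy => ⟨hUup x hx.1 y hxy, hVup x hx.2 y hxy⟩, ?_⟩
    rintro S hS hdir s hs ⟨hsU, hsV⟩
    obtain ⟨a, haS, haU⟩ := hUin S hS hdir s hs hsU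
    obtain ⟨b, hbS, hbV⟩ := hVin S hS hdir s hs hsV
    obtain ⟨c, hcS, hac, hbc⟩ := hdir a haS b hbS
    exact ⟨c, hcS, hUup a haU c hac, hVup b hbV c hbc⟩
  isOpen_sUnion := by
    intro C hC
    refine ⟨fun x hx y hxy => ?_, ?_⟩
    · obtain ⟨t, htC, hxt⟩ := hx
      exact ⟨t, htC, (hC t htC).1 x hxt y hxy⟩
    · rintro S hS hdir s hs ⟨t, htC, hst⟩
      obtain ⟨a, haS, hat⟩ := (hC t htC).2 S hS hdir s hs hst
      exact ⟨a, haS, t, htC, hat⟩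

/-- A continuous poset is bicontinuous if the way-below relation admits the dual
characterization via filtered infima and each `↟x` is filtered with infimum `x`. -/
def IsBicontinuous (P : Type*) [Preorder P] : Prop :=
  IsContinuousPoset P ∧
  (∀ x y : P, wayBelow x y ↔
    ∀ S : Set P, S.Nonempty → DirectedOn (· ≥ ·) S → ∀ i : P, IsGLB S i → i ≤ x →
      ∃ s ∈ S, s ≤ y) ∧
  (∀ x : P, {a | wayBelow x a}.Nonempty ∧ DirectedOn (· ≥ ·) {a | wayBelow x a} ∧
    IsGLB {a | wayBelow x a} x)

/-- The interval topology on a bicontinuous poset, with basic open sets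
`(a,b) = {x | a ≪ x ≪ b}`. -/
def intervalTop (P : Type*) [Preorder P] : TopologicalSpace P :=
  .generateFrom {s | ∃ a b : P, s = {x | wayBelow a x ∧ wayBelow x b}}

/-- A globally hyperbolic poset: bicontinuous, with all closed intervals compact
in the interval topology. -/
def IsGloballyHyperbolic (P : Type*) [PartialOrder P] : Prop :=
  IsBicontinuous P ∧ ∀ a b : P, a ≤ b → @IsCompact P (intervalTop P) (Set.Icc a b)

variable (X : Type*) [PartialOrder X]

/-- The interval domain of a poset: closed order intervals `[a,b]`. -/
structure IntDom where
  carrier : Set X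
  isIcc : ∃ a b : X, a ≤ b ∧ carrier = Set.Icc a b

/-- Reverse inclusion order on the interval domain. -/
instance : PartialOrder (IntDom X) where
  le I J := J.carrier ⊆ I.carrier
  le_refl I := subset_rfl
  le_trans I J K h1 h2 := Set.Subset.trans h2 h1
  le_antisymm I J h1 h2 := by
    cases I; cases J
    simp only [IntDom.mk.injEq]
    exact subset_antisymm h2 h1

instance : TopologicalSpace (IntDom X) := scottTop (IntDom X)

section Aux

open Set

variable {X}

/-! ### Basic `wayBelow` lemmas -/

lemma wayBelow_le {a x : X} (h : wayBelow a x) : a ≤ x := by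
  obtain ⟨z, hz, haz⟩ := h {x} ⟨x, rfl⟩
    (directedOn_singleton x) x isLUB_singleton le_rfl
  rw [Set.mem_singleton_iff] at hz
  subst hz
  exact haz

lemma wayBelow_mono_left {a' a x : X} (h1 : a' ≤ a) (h2 : wayBelow a x) : wayBelow a' x := by
  intro S hS hd s hs hle
  obtain ⟨z, hz, haz⟩ := h2 S hS hd s hs hle
  exact ⟨z, hz, h1.trans haz⟩

lemma wayBelow_mono_right {a x x' : X} (h2 : wayBelow a x) (h1 : x ≤ x') : wayBelow a x' :=
  fun S hS hd s hs hle => h2 S hS hd s hs (h1.trans hle)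

/-- The full way-below set of `x` is nonempty, directed, with lub `x`. -/
lemma belowSet (hc : IsContinuousPoset X) (x : X) :
    {a | wayBelow a x}.Nonempty ∧ DirectedOn (· ≤ ·) {a | wayBelow a x} ∧
      IsLUB {a | wayBelow a x} x := by
  obtain ⟨S, -, hSne, hSdir, hSwb, hSlub⟩ := hc x
  have hsub : S ⊆ {a | wayBelow a x} := fun a ha => hSwb a ha
  refine ⟨hSne.mono hsub, ?_, ?_⟩
  · intro a ha b hb
    obtain ⟨s1, hs1, ha1⟩ := ha S hSne hSdir x hSlub le_rfl
    obtain ⟨s2, hs2, hb2⟩ := hb S hSne hSdir x hSlub le_rfl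
    obtain ⟨s3, hs3, h13, h23⟩ := hSdir s1 hs1 s2 hs2
    exact ⟨s3, hsub hs3, ha1.trans h13, hb2.trans h23⟩
  · exact ⟨fun a ha => wayBelow_le ha, fun u hu => hSlub.2 fun a ha => hu (hsub ha)⟩

/-- Interpolation in a continuous poset. -/
lemma interp_left (hc : IsContinuousPoset X) {a c : X} (h : wayBelow a c) :
    ∃ a', wayBelow a a' ∧ wayBelow a' c := by
  obtain ⟨hne_c, hdir_c, hlub_c⟩ := belowSet hc c
  set D := {z : X | ∃ w, wayBelow z w ∧ wayBelow w c} with hD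
  have hDne : D.Nonempty := by
    obtain ⟨w, hw⟩ := hne_c
    obtain ⟨z, hz⟩ := (belowSet hc w).1
    exact ⟨z, w, hz, hw⟩
  have hDdir : DirectedOn (· ≤ ·) D := by
    rintro z1 ⟨w1, hz1, hw1⟩ z2 ⟨w2, hz2, hw2⟩
    obtain ⟨w3, hw3, h13, h23⟩ := hdir_c w1 hw1 w2 hw2
    obtain ⟨-, hdir3, -⟩ := belowSet hc w3
    obtain ⟨z3, hz3, h1, h2⟩ := hdir3 z1 (wayBelow_mono_right hz1 h13)
      z2 (wayBelow_mono_right hz2 h23)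
    exact ⟨z3, ⟨w3, hz3, hw3⟩, h1, h2⟩
  have hDlub : IsLUB D c := by
    constructor
    · rintro z ⟨w, hzw, hwc⟩
      exact (wayBelow_le hzw).trans (wayBelow_le hwc)
    · intro u hu
      refine hlub_c.2 fun w hw => ?_
      exact (belowSet hc w).2.2.2 fun z hz => hu ⟨w, hz, hw⟩
  obtain ⟨z, ⟨w, hzw, hwc⟩, haz⟩ := h D hDne hDdir c hDlub le_rfl
  exact ⟨w, wayBelow_mono_left haz hzw, hwc⟩

variable (X) in
abbrev DualWB : Prop := ∀ x y : X, wayBelow x y ↔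
    ∀ S : Set X, S.Nonempty → DirectedOn (· ≥ ·) S → ∀ i : X, IsGLB S i → i ≤ x →
      ∃ s ∈ S, s ≤ y

variable (X) in
abbrev FilWB : Prop := ∀ x : X,
    {a | wayBelow x a}.Nonempty ∧ DirectedOn (· ≥ ·) {a | wayBelow x a} ∧
    IsGLB {a | wayBelow x a} x

variable (X) in
abbrev CptIcc : Prop := ∀ a b : X, a ≤ b → @IsCompact X (intervalTop X) (Set.Icc a b)

/-- Dual interpolation. -/
lemma interp_right (hdual : DualWB X) (hfil : FilWB X) {d b : X} (h : wayBelow d b) :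
    ∃ b', wayBelow d b' ∧ wayBelow b' b := by
  obtain ⟨hne_d, hdir_d, hglb_d⟩ := hfil d
  set D := {z : X | ∃ w, wayBelow d w ∧ wayBelow w z} with hD
  have hDne : D.Nonempty := by
    obtain ⟨w, hw⟩ := hne_d
    obtain ⟨z, hz⟩ := (hfil w).1
    exact ⟨z, w, hw, hz⟩
  have hDdir : DirectedOn (· ≥ ·) D := by
    rintro z1 ⟨w1, hw1, hz1⟩ z2 ⟨w2, hw2, hz2⟩
    obtain ⟨w3, hw3, h13, h23⟩ := hdir_d w1 hw1 w2 hw2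
    obtain ⟨-, hdir3, -⟩ := hfil w3
    obtain ⟨z3, hz3, h1, h2⟩ := hdir3 z1 (wayBelow_mono_left h13 hz1)
      z2 (wayBelow_mono_left h23 hz2)
    exact ⟨z3, ⟨w3, hw3, hz3⟩, h1, h2⟩
  have hDglb : IsGLB D d := by
    constructor
    · rintro z ⟨w, hdw, hwz⟩
      exact (wayBelow_le hdw).trans (wayBelow_le hwz)
    · intro u hu
      refine hglb_d.2 fun w hw => ?_
      exact (hfil w).2.2.2 fun z hz => hu ⟨w, hw, hz⟩
  obtain ⟨z, ⟨w, hdw, hwz⟩, hzb⟩ := (hdual d b).1 h D hDne hDdir d hDglb le_rfl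
  exact ⟨w, hdw, wayBelow_mono_right hwz hzb⟩

/-! ### The interval topology -/

lemma intervalTop_isOpen {U : Set X}
    (h : ∀ y ∈ U, ∃ a b : X, wayBelow a y ∧ wayBelow y b ∧
      {z | wayBelow a z ∧ wayBelow z b} ⊆ U) :
    @IsOpen X (intervalTop X) U := by
  letI := intervalTop X
  have : U = ⋃₀ {s | (∃ a b : X, s = {x | wayBelow a x ∧ wayBelow x b}) ∧ s ⊆ U} := by
    ext y
    constructor
    · intro hy
      obtain ⟨a, b, h1, h2, h3⟩ := h y hy
      exact ⟨_, ⟨⟨a, b, rfl⟩, h3⟩, h1, h2⟩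
    · rintro ⟨s, ⟨-, hsU⟩, hys⟩
      exact hsU hys
  rw [this]
  exact isOpen_sUnion fun s hs => TopologicalSpace.isOpen_generateFrom_of_mem hs.1

lemma closed_upper (hfil : FilWB X) (hc : IsContinuousPoset X) (t : X) :
    @IsClosed X (intervalTop X) {y | t ≤ y} := by
  letI := intervalTop X
  rw [← isOpen_compl_iff]
  apply intervalTop_isOpen
  intro y hy
  obtain ⟨-, -, hglb⟩ := hfil y
  have : ¬ ∀ b0 ∈ {a | wayBelow y a}, t ≤ b0 := fun hall => hy (hglb.2 hall)
  push_neg at this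
  obtain ⟨b0, hb0, htb0⟩ := this
  obtain ⟨a0, ha0⟩ := (belowSet hc y).1
  refine ⟨a0, b0, ha0, hb0, ?_⟩
  rintro z ⟨-, hzb⟩ (htz : t ≤ z)
  exact htb0 (htz.trans (wayBelow_le hzb))

lemma closed_lower (hfil : FilWB X) (hc : IsContinuousPoset X) (v : X) :
    @IsClosed X (intervalTop X) {y | y ≤ v} := by
  letI := intervalTop X
  rw [← isOpen_compl_iff]
  apply intervalTop_isOpen
  intro y hy
  obtain ⟨-, -, hlub⟩ := belowSet hc y
  have : ¬ ∀ a0 ∈ {a | wayBelow a y}, a0 ≤ v := fun hall => hy (hlub.2 hall)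
  push_neg at this
  obtain ⟨a0, ha0, hav⟩ := this
  obtain ⟨b0, hb0⟩ := (hfil y).1
  refine ⟨a0, b0, ha0, hb0, ?_⟩
  rintro z ⟨hza, -⟩ (hzv : z ≤ v)
  exact hav ((wayBelow_le hza).trans hzv)

/-! ### Bounds of finite subsets of directed sets -/

lemma directedOn_finset_bound {s : Set X} (hd : DirectedOn (· ≤ ·) s) (hne : s.Nonempty) :
    ∀ t : Finset X, ↑t ⊆ s → ∃ z ∈ s, ∀ x ∈ t, x ≤ z := by
  classical
  intro t
  induction t using Finset.induction_on with
  | empty =>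
    intro _
    obtain ⟨z, hz⟩ := hne
    exact ⟨z, hz, by simp⟩
  | insert a r hmem ih =>
    intro hts
    have hr : (↑r : Set X) ⊆ s := fun x hx => hts (by simp [hx])
    obtain ⟨z, hz, hzall⟩ := ih hr
    have haS : a ∈ s := hts (by simp)
    obtain ⟨w, hw, hzw, haw⟩ := hd z hz a haS
    refine ⟨w, hw, fun x hx => ?_⟩
    rcases Finset.mem_insert.1 hx with rfl | hx
    · exact haw
    · exact (hzall x hx).trans hzw

lemma filteredOn_finset_bound {s : Set X} (hd : DirectedOn (· ≥ ·) s) (hne : s.Nonempty) :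
    ∀ t : Finset X, ↑t ⊆ s → ∃ z ∈ s, ∀ x ∈ t, z ≤ x := by
  classical
  intro t
  induction t using Finset.induction_on with
  | empty =>
    intro _
    obtain ⟨z, hz⟩ := hne
    exact ⟨z, hz, by simp⟩
  | insert a r hmem ih =>
    intro hts
    have hr : (↑r : Set X) ⊆ s := fun x hx => hts (by simp [hx])
    obtain ⟨z, hz, hzall⟩ := ih hr
    have haS : a ∈ s := hts (by simp)
    obtain ⟨w, hw, hzw, haw⟩ := hd z hz a haS
    refine ⟨w, hw, fun x hx => ?_⟩
    rcases Finset.mem_insert.1 hx with rfl | hx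
    · exact haw
    · exact hzw.trans (hzall x hx)

/-- Directed subsets of a compact interval have least upper bounds. -/
lemma directed_lub (hfil : FilWB X) (hcpt : CptIcc X) (hc : IsContinuousPoset X) {T : Set X} {p q : X} (hpq : p ≤ q)
    (hT : T ⊆ Set.Icc p q) (hne : T.Nonempty) (hdir : DirectedOn (· ≤ ·) T) :
    ∃ c, IsLUB T c := by
  classical
  letI := intervalTop X
  set F : ({t // t ∈ T} ⊕ {v // v ∈ upperBounds T}) → Set X :=
    fun i => Sum.rec (fun t => {y | t.1 ≤ y}) (fun v => {y | y ≤ v.1}) i with hF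
  have hclosed : ∀ i, IsClosed (F i) := by
    rintro (⟨t, ht⟩ | ⟨v, hv⟩)
    · exact closed_upper hfil hc t
    · exact closed_lower hfil hc v
  have hfin : ∀ u : Finset ({t // t ∈ T} ⊕ {v // v ∈ upperBounds T}),
      (Set.Icc p q ∩ ⋂ i ∈ u, F i).Nonempty := by
    intro u
    obtain ⟨t0, ht0⟩ := id hne
    set g : ({t // t ∈ T} ⊕ {v // v ∈ upperBounds T}) → X :=
      fun i => Sum.rec (fun t => t.1) (fun _ => t0) i with hg
    have hgmem : ↑(u.image g) ⊆ T := by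
      intro x hx
      simp only [Finset.coe_image, Set.mem_image, Finset.mem_coe] at hx
      obtain ⟨i, -, rfl⟩ := hx
      rcases i with ⟨t, ht⟩ | ⟨v, hv⟩
      · exact ht
      · exact ht0
    obtain ⟨z, hz, hzall⟩ := directedOn_finset_bound hdir hne (u.image g) hgmem
    refine ⟨z, hT hz, ?_⟩
    simp only [Set.mem_iInter]
    rintro (⟨t, ht⟩ | ⟨v, hv⟩) hi
    · exact hzall _ (Finset.mem_image_of_mem g hi)
    · exact hv hz
  obtain ⟨c, -, hcF⟩ := (hcpt p q hpq).inter_iInter_nonempty F hclosed hfin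
  rw [Set.mem_iInter] at hcF
  exact ⟨c, fun t ht => hcF (Sum.inl ⟨t, ht⟩), fun v hv => hcF (Sum.inr ⟨v, hv⟩)⟩

/-- Filtered subsets of a compact interval have greatest lower bounds. -/
lemma filtered_glb (hfil : FilWB X) (hcpt : CptIcc X) (hc : IsContinuousPoset X) {T : Set X} {p q : X} (hpq : p ≤ q)
    (hT : T ⊆ Set.Icc p q) (hne : T.Nonempty) (hdir : DirectedOn (· ≥ ·) T) :
    ∃ d, IsGLB T d := by
  classical
  letI := intervalTop X
  set F : ({t // t ∈ T} ⊕ {v // v ∈ lowerBounds T}) → Set X :=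
    fun i => Sum.rec (fun t => {y | y ≤ t.1}) (fun v => {y | v.1 ≤ y}) i with hF
  have hclosed : ∀ i, IsClosed (F i) := by
    rintro (⟨t, ht⟩ | ⟨v, hv⟩)
    · exact closed_lower hfil hc t
    · exact closed_upper hfil hc v
  have hfin : ∀ u : Finset ({t // t ∈ T} ⊕ {v // v ∈ lowerBounds T}),
      (Set.Icc p q ∩ ⋂ i ∈ u, F i).Nonempty := by
    intro u
    obtain ⟨t0, ht0⟩ := id hne
    set g : ({t // t ∈ T} ⊕ {v // v ∈ lowerBounds T}) → X :=
      fun i => Sum.rec (fun t => t.1) (fun _ => t0) i with hg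
    have hgmem : ↑(u.image g) ⊆ T := by
      intro x hx
      simp only [Finset.coe_image, Set.mem_image, Finset.mem_coe] at hx
      obtain ⟨i, -, rfl⟩ := hx
      rcases i with ⟨t, ht⟩ | ⟨v, hv⟩
      · exact ht
      · exact ht0
    obtain ⟨z, hz, hzall⟩ := filteredOn_finset_bound hdir hne (u.image g) hgmem
    refine ⟨z, hT hz, ?_⟩
    simp only [Set.mem_iInter]
    rintro (⟨t, ht⟩ | ⟨v, hv⟩) hi
    · exact hzall _ (Finset.mem_image_of_mem g hi)
    · exact hv hz
  obtain ⟨c, -, hcF⟩ := (hcpt p q hpq).inter_iInter_nonempty F hclosed hfin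
  rw [Set.mem_iInter] at hcF
  exact ⟨c, fun t ht => hcF (Sum.inl ⟨t, ht⟩), fun v hv => hcF (Sum.inr ⟨v, hv⟩)⟩

/-! ### Endpoints of intervals -/

lemma endpoints_unique {a b c d : X} (hab : a ≤ b) (hcd : c ≤ d)
    (h : Set.Icc a b = Set.Icc c d) : a = c ∧ b = d := by
  have hc : c ∈ Set.Icc a b := by rw [h]; exact ⟨le_rfl, hcd⟩
  have hd : d ∈ Set.Icc a b := by rw [h]; exact ⟨hcd, le_rfl⟩
  have ha : a ∈ Set.Icc c d := by rw [← h]; exact ⟨le_rfl, hab⟩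
  have hb : b ∈ Set.Icc c d := by rw [← h]; exact ⟨hab, le_rfl⟩
  exact ⟨le_antisymm hc.1 ha.1, le_antisymm hb.2 hd.2⟩

noncomputable def IntDom.left (I : IntDom X) : X := I.isIcc.choose

noncomputable def IntDom.right (I : IntDom X) : X := I.isIcc.choose_spec.choose

lemma IntDom.left_le_right (I : IntDom X) : I.left ≤ I.right :=
  I.isIcc.choose_spec.choose_spec.1

lemma IntDom.carrier_eq (I : IntDom X) : I.carrier = Set.Icc I.left I.right :=
  I.isIcc.choose_spec.choose_spec.2

lemma IntDom.eq_endpoints {I : IntDom X} {c d : X} (hcd : c ≤ d)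
    (h : I.carrier = Set.Icc c d) : I.left = c ∧ I.right = d :=
  endpoints_unique I.left_le_right hcd (I.carrier_eq ▸ h)

lemma IntDom.ext' {I J : IntDom X} (h : I.carrier = J.carrier) : I = J := by
  cases I; cases J
  simpa using h

lemma intdom_le_iff {I J : IntDom X} : I ≤ J ↔ J.carrier ⊆ I.carrier := Iff.rfl

lemma le_endpoints {I J : IntDom X} (h : I ≤ J) : I.left ≤ J.left ∧ J.right ≤ I.right := by
  have h1 : J.left ∈ I.carrier := h (by rw [J.carrier_eq]; exact ⟨le_rfl, J.left_le_right⟩)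
  have h2 : J.right ∈ I.carrier := h (by rw [J.carrier_eq]; exact ⟨J.left_le_right, le_rfl⟩)
  rw [I.carrier_eq] at h1 h2
  exact ⟨h1.1, h2.2⟩

/-- The interval `[a,b]` as an element of the interval domain. -/
def mkInt (a b : X) (h : a ≤ b) : IntDom X := ⟨Set.Icc a b, a, b, h, rfl⟩

lemma mkInt_left {a b : X} (h : a ≤ b) : (mkInt a b h).left = a :=
  (IntDom.eq_endpoints h rfl).1

lemma mkInt_right {a b : X} (h : a ≤ b) : (mkInt a b h).right = b :=
  (IntDom.eq_endpoints h rfl).2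

lemma le_mkInt {I : IntDom X} {a b : X} (h : a ≤ b) (h1 : I.left ≤ a) (h2 : b ≤ I.right) :
    I ≤ mkInt a b h := by
  rw [intdom_le_iff, I.carrier_eq]
  exact Set.Icc_subset_Icc h1 h2

/-! ### Suprema in the interval domain -/

lemma lub_endpoints (hfil : FilWB X) (hcpt : CptIcc X) (hc : IsContinuousPoset X) {S : Set (IntDom X)} (hne : S.Nonempty)
    (hdir : DirectedOn (· ≤ ·) S) {s : IntDom X} (hlub : IsLUB S s) :
    ∃ S' ⊆ S, S'.Nonempty ∧ DirectedOn (· ≤ ·) S' ∧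
      DirectedOn (· ≤ ·) (IntDom.left '' S') ∧ DirectedOn (· ≥ ·) (IntDom.right '' S') ∧
      IsLUB (IntDom.left '' S') s.left ∧ IsGLB (IntDom.right '' S') s.right := by
  obtain ⟨J0, hJ0⟩ := hne
  set S' := {J ∈ S | J0 ≤ J} with hS'
  have hsub : S' ⊆ S := fun J hJ => hJ.1
  have hne' : S'.Nonempty := ⟨J0, hJ0, le_rfl⟩
  have hdir' : DirectedOn (· ≤ ·) S' := by
    rintro J1 ⟨h1, h1'⟩ J2 ⟨h2, h2'⟩
    obtain ⟨K, hK, hK1, hK2⟩ := hdir J1 h1 J2 h2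
    exact ⟨K, ⟨hK, h1'.trans hK1⟩, hK1, hK2⟩
  have hlub' : IsLUB S' s := by
    constructor
    · exact fun J hJ => hlub.1 (hsub hJ)
    · intro u hu
      refine hlub.2 fun J hJ => ?_
      obtain ⟨K, hK, hJK, h0K⟩ := hdir J hJ J0 hJ0
      exact hJK.trans (hu ⟨hK, h0K⟩)
  have hbdd : ∀ J ∈ S', J0.left ≤ J.left ∧ J.right ≤ J0.right := fun J hJ => le_endpoints hJ.2
  have hdirL : DirectedOn (· ≤ ·) (IntDom.left '' S') := by
    rintro x ⟨J1, hJ1, rfl⟩ y ⟨J2, hJ2, rfl⟩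
    obtain ⟨K, hK, hK1, hK2⟩ := hdir' J1 hJ1 J2 hJ2
    exact ⟨K.left, ⟨K, hK, rfl⟩, (le_endpoints hK1).1, (le_endpoints hK2).1⟩
  have hdirR : DirectedOn (· ≥ ·) (IntDom.right '' S') := by
    rintro x ⟨J1, hJ1, rfl⟩ y ⟨J2, hJ2, rfl⟩
    obtain ⟨K, hK, hK1, hK2⟩ := hdir' J1 hJ1 J2 hJ2
    exact ⟨K.right, ⟨K, hK, rfl⟩, (le_endpoints hK1).2, (le_endpoints hK2).2⟩
  have hsubL : IntDom.left '' S' ⊆ Set.Icc J0.left J0.right := by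
    rintro x ⟨J, hJ, rfl⟩
    exact ⟨(hbdd J hJ).1, J.left_le_right.trans (hbdd J hJ).2⟩
  have hsubR : IntDom.right '' S' ⊆ Set.Icc J0.left J0.right := by
    rintro x ⟨J, hJ, rfl⟩
    exact ⟨(hbdd J hJ).1.trans J.left_le_right, (hbdd J hJ).2⟩
  obtain ⟨cs, hcs⟩ := directed_lub hfil hcpt hc J0.left_le_right hsubL (hne'.image _) hdirL
  obtain ⟨ds, hds⟩ := filtered_glb hfil hcpt hc J0.left_le_right hsubR (hne'.image _) hdirR
  have hcle : cs ≤ s.left := hcs.2 (by rintro x ⟨J, hJ, rfl⟩; exact (le_endpoints (hlub'.1 hJ)).1)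
  have hdle : s.right ≤ ds := hds.2 (by rintro x ⟨J, hJ, rfl⟩; exact (le_endpoints (hlub'.1 hJ)).2)
  have hcd : cs ≤ ds := hcle.trans (s.left_le_right.trans hdle)
  have hIlub : IsLUB S' (mkInt cs ds hcd) := by
    constructor
    · intro J hJ
      exact le_mkInt hcd (hcs.1 ⟨J, hJ, rfl⟩) (hds.1 ⟨J, hJ, rfl⟩)
    · intro u hu
      have h1 : cs ≤ u.left := hcs.2 (by rintro x ⟨J, hJ, rfl⟩; exact (le_endpoints (hu hJ)).1)
      have h2 : u.right ≤ ds := hds.2 (by rintro x ⟨J, hJ, rfl⟩; exact (le_endpoints (hu hJ)).2)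
      rw [intdom_le_iff, u.carrier_eq]
      exact fun z hz => ⟨h1.trans hz.1, hz.2.trans h2⟩
    -- note: the second bullet above shows u.carrier ⊆ Icc cs ds = (mkInt cs ds hcd).carrier
  have hse : s = mkInt cs ds hcd := hlub'.unique hIlub
  have hsl : s.left = cs ∧ s.right = ds := by
    refine IntDom.eq_endpoints hcd ?_
    rw [hse]
    rfl
  refine ⟨S', hsub, hne', hdir', hdirL, hdirR, ?_, ?_⟩
  · rw [hsl.1]; exact hcs
  · rw [hsl.2]; exact hds

/-! ### Maximal elements of the interval domain -/

lemma isMax_iff {I : IntDom X} : IsMax I ↔ ∃ x, I.carrier = Set.Icc x x := by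
  constructor
  · intro hmax
    refine ⟨I.left, ?_⟩
    have hIJ : I ≤ mkInt I.left I.left le_rfl := le_mkInt le_rfl le_rfl I.left_le_right
    have h : I.carrier ⊆ Set.Icc I.left I.left := hmax hIJ
    refine subset_antisymm h ?_
    rw [I.carrier_eq]
    exact Set.Icc_subset_Icc le_rfl I.left_le_right
  · rintro ⟨x, hx⟩ J hIJ
    have h1 : J.left ∈ I.carrier := hIJ (by rw [J.carrier_eq]; exact ⟨le_rfl, J.left_le_right⟩)
    have h2 : J.right ∈ I.carrier := hIJ (by rw [J.carrier_eq]; exact ⟨J.left_le_right, le_rfl⟩)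
    rw [hx] at h1 h2
    have e1 : J.left = x := le_antisymm h1.2 h1.1
    have e2 : J.right = x := le_antisymm h2.2 h2.1
    intro z hz
    rw [hx] at hz
    have hzx : z = x := le_antisymm hz.2 hz.1
    rw [J.carrier_eq, e1, e2, hzx]
    exact ⟨le_rfl, le_rfl⟩

lemma isMax_mk (x : X) : IsMax (mkInt x x le_rfl) := isMax_iff.2 ⟨x, rfl⟩

lemma max_right_eq_left {I : IntDom X} (h : IsMax I) : I.right = I.left := by
  obtain ⟨x, hx⟩ := isMax_iff.1 h
  obtain ⟨h1, h2⟩ := IntDom.eq_endpoints le_rfl hx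
  rw [h1, h2]

/-! ### Scott-open sets tracing basic interval-open sets -/

lemma W_scottOpen (hdual : DualWB X) (hfil : FilWB X) (hcpt : CptIcc X)
    (hc : IsContinuousPoset X) (a b : X) :
    IsOpen {I : IntDom X | wayBelow a I.left ∧ wayBelow I.right b} := by
  refine ⟨?_, ?_⟩
  · rintro I ⟨h1, h2⟩ J hIJ
    obtain ⟨hl, hr⟩ := le_endpoints hIJ
    exact ⟨wayBelow_mono_right h1 hl, wayBelow_mono_left hr h2⟩
  · rintro S hSne hSdir s hs ⟨h1, h2⟩
    obtain ⟨a', haa', ha'⟩ := interp_left hc h1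
    obtain ⟨b', hb', hb'b⟩ := interp_right hdual hfil h2
    obtain ⟨S', hsub, hne', hdir', hdirL, hdirR, hlubL, hglbR⟩ :=
      lub_endpoints hfil hcpt hc hSne hSdir hs
    obtain ⟨z, ⟨J1, hJ1, rfl⟩, h1z⟩ := ha' _ (hne'.image _) hdirL s.left hlubL le_rfl
    obtain ⟨r, ⟨J2, hJ2, rfl⟩, h2r⟩ :=
      (hdual s.right b').1 hb' _ (hne'.image _) hdirR s.right hglbR le_rfl
    obtain ⟨K, hK, h1K, h2K⟩ := hdir' J1 hJ1 J2 hJ2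
    refine ⟨K, hsub hK, ?_, ?_⟩
    · exact wayBelow_mono_right (wayBelow_mono_right haa' h1z) (le_endpoints h1K).1
    · exact wayBelow_mono_left ((le_endpoints h2K).2.trans h2r) hb'b

/-! ### Continuity of the two maps -/

lemma cont_toFun (hfil : FilWB X) (hc : IsContinuousPoset X) :
    @Continuous X {I : IntDom X // IsMax I} (intervalTop X) _
      (fun x => ⟨mkInt x x le_rfl, isMax_mk x⟩) := by
  letI := intervalTop X
  refine Continuous.subtype_mk ?_ _
  rw [continuous_def]
  intro W hW
  apply intervalTop_isOpen
  intro x hx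
  obtain ⟨hup, hin⟩ := hW
  obtain ⟨hneL, hdirL, hlubL⟩ := belowSet hc x
  obtain ⟨hneU, hfilU, hglbU⟩ := hfil x
  set S : Set (IntDom X) := {I | wayBelow I.left x ∧ wayBelow x I.right} with hS
  have hmem : ∀ {a b : X}, (ha : wayBelow a x) → (hb : wayBelow x b) →
      mkInt a b ((wayBelow_le ha).trans (wayBelow_le hb)) ∈ S := by
    intro a b ha hb
    refine ⟨?_, ?_⟩
    · rw [mkInt_left]; exact ha
    · rw [mkInt_right]; exact hb
  have hSne : S.Nonempty := by
    obtain ⟨a0, ha0⟩ := hneL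
    obtain ⟨b0, hb0⟩ := hneU
    exact ⟨_, hmem ha0 hb0⟩
  have hSdir : DirectedOn (· ≤ ·) S := by
    rintro I1 ⟨hI1l, hI1r⟩ I2 ⟨hI2l, hI2r⟩
    obtain ⟨a3, ha3, h13, h23⟩ := hdirL _ hI1l _ hI2l
    obtain ⟨b3, hb3, h13', h23'⟩ := hfilU _ hI1r _ hI2r
    have hab : a3 ≤ b3 := (wayBelow_le ha3).trans (wayBelow_le hb3)
    exact ⟨mkInt a3 b3 hab, hmem ha3 hb3, le_mkInt hab h13 h13', le_mkInt hab h23 h23'⟩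
  have hSlub : IsLUB S (mkInt x x le_rfl) := by
    constructor
    · rintro I ⟨hIl, hIr⟩
      exact le_mkInt le_rfl (wayBelow_le hIl) (wayBelow_le hIr)
    · intro u hu
      show u.carrier ⊆ Set.Icc x x
      intro z hz
      have hz' : ∀ a ∈ {a | wayBelow a x}, a ≤ z := by
        intro a ha
        obtain ⟨b0, hb0⟩ := hneU
        exact (hu (hmem ha hb0) hz).1
      have hz'' : ∀ b ∈ {a | wayBelow x a}, z ≤ b := by
        intro b hb
        obtain ⟨a0, ha0⟩ := hneL
        exact (hu (hmem ha0 hb) hz).2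
      exact ⟨hlubL.2 hz', hglbU.2 hz''⟩
  obtain ⟨I, hIS, hIW⟩ := hin S hSne hSdir (mkInt x x le_rfl) hSlub hx
  refine ⟨I.left, I.right, hIS.1, hIS.2, ?_⟩
  rintro z ⟨hz1, hz2⟩
  show mkInt z z le_rfl ∈ W
  exact hup I hIW _ (le_mkInt le_rfl (wayBelow_le hz1) (wayBelow_le hz2))

lemma cont_invFun (hdual : DualWB X) (hfil : FilWB X) (hcpt : CptIcc X)
    (hc : IsContinuousPoset X) :
    @Continuous {I : IntDom X // IsMax I} X _ (intervalTop X)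
      (fun I => I.1.left) := by
  show @Continuous _ _ _ (TopologicalSpace.generateFrom _) _
  rw [continuous_generateFrom_iff]
  rintro s ⟨a, b, rfl⟩
  have heq : (fun I : {I : IntDom X // IsMax I} => I.1.left) ⁻¹'
        {x | wayBelow a x ∧ wayBelow x b}
      = Subtype.val ⁻¹' {I : IntDom X | wayBelow a I.left ∧ wayBelow I.right b} := by
    ext I
    simp only [Set.mem_preimage, Set.mem_setOf_eq]
    rw [max_right_eq_left I.2]
  rw [heq]
  exact (W_scottOpen hdual hfil hcpt hc a b).preimage continuous_subtype_val

end Aux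

/-- For a globally hyperbolic poset `X`, the maximal elements of the interval
domain `IX` with the relative Scott topology are homeomorphic to `X` with the
interval topology, via `x ↦ [x,x]`. -/
theorem intDom_max_homeomorph (hX : IsGloballyHyperbolic X) :
    ∃ h : @Homeomorph X {I : IntDom X // IsMax I} (intervalTop X) _,
      ∀ x : X, (h x).1.carrier = Set.Icc x x := by
  obtain ⟨⟨hc, hdual, hfil⟩, hcpt⟩ := hX
  refine ⟨@Homeomorph.mk X {I : IntDom X // IsMax I} (intervalTop X) _
    ⟨fun x => ⟨mkInt x x le_rfl, isMax_mk x⟩, fun I => I.1.left, ?_, ?_⟩ ?_ ?_,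
    fun x => rfl⟩
  · intro x
    exact mkInt_left le_rfl
  · intro I
    apply Subtype.ext
    apply IntDom.ext'
    obtain ⟨x, hx⟩ := isMax_iff.1 I.2
    have hl : I.1.left = x := (IntDom.eq_endpoints le_rfl hx).1
    show Set.Icc I.1.left I.1.left = I.1.carrier
    rw [hl, hx]
  · exact cont_toFun hfil hc
  · exact cont_invFun hdual hfil hcpt hc
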